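/- Let x_1, …, x_n ∈ ℝ^d, b : ℕ → ℝ, and H be as in the multivariate learning setup (unit-norm data, b_0 ≥ 1, b_k ≥ 1/k² for k ≥ 1, Σ_k b_k < ∞, H positive definite). Let g and h be functions given by multivariate power-series families with auxiliary functions g̃ and h̃, and suppose g̃(1), g̃′(1), h̃(1), h̃′(1) are all finite. Define y ∈ ℝⁿ by y_a = g(x_a)·h(x_a). Then √(yᵀ H⁻¹ y) ≤ g̃′(1) h̃(1) + g̃(1) h̃′(1) + g̃(0) h̃(0). -/

import Mathlib

open Matrix
open scoped RealInnerProductSpace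

/-- The `k`-th auxiliary coefficient `ãₖ = ∑_v |a_{k,v}| ∏ᵢ ‖β_{k,v,i}‖` of a
multivariate power-series family. -/
noncomputable def auxCoef (d : ℕ) (a : ℕ → ℕ → ℝ)
    (β : (k : ℕ) → ℕ → Fin k → EuclideanSpace ℝ (Fin d)) (k : ℕ) : ℝ :=
  ∑' v : ℕ, |a k v| * ∏ i : Fin k, ‖β k v i‖

/-- The function `x ↦ ∑_k ∑_v a_{k,v} ∏ᵢ ⟪β_{k,v,i}, x⟫` represented by a
multivariate power-series family. -/
noncomputable def familyFun (d : ℕ) (a : ℕ → ℕ → ℝ)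
    (β : (k : ℕ) → ℕ → Fin k → EuclideanSpace ℝ (Fin d))
    (x : EuclideanSpace ℝ (Fin d)) : ℝ :=
  ∑' k : ℕ, ∑' v : ℕ, a k v * ∏ i : Fin k, ⟪β k v i, x⟫

set_option maxHeartbeats 1000000

lemma abs_tsum_le' {ι : Type*} {f : ι → ℝ} (h : Summable fun i => |f i|) :
    |∑' i, f i| ≤ ∑' i, |f i| := by
  simpa [Real.norm_eq_abs] using
    norm_tsum_le_tsum_norm (f := f) (by simpa [Real.norm_eq_abs] using h)

noncomputable def tens {d K : ℕ} (β : Fin K → EuclideanSpace ℝ (Fin d)) :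
    EuclideanSpace ℝ (Fin K → Fin d) :=
  WithLp.toLp 2 (fun f => ∏ i, β i (f i))

lemma inner_tens {d K : ℕ} (β γ : Fin K → EuclideanSpace ℝ (Fin d)) :
    ⟪tens β, tens γ⟫ = ∏ i, ⟪β i, γ i⟫ := by
  simp only [PiLp.inner_apply, RCLike.inner_apply, conj_trivial, tens, PiLp.toLp_apply]
  rw [Finset.prod_univ_sum]
  exact Finset.sum_congr rfl (fun f _ => Finset.prod_mul_distrib.symm)

lemma norm_tens {d K : ℕ} (β : Fin K → EuclideanSpace ℝ (Fin d)) :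
    ‖tens β‖ = ∏ i, ‖β i‖ := by
  have h : ‖tens β‖ ^ 2 = (∏ i, ‖β i‖) ^ 2 := by
    rw [← real_inner_self_eq_norm_sq, inner_tens, ← Finset.prod_pow]
    exact Finset.prod_congr rfl fun i _ => real_inner_self_eq_norm_sq _
  have h2 := Finset.prod_nonneg (fun i (_ : i ∈ Finset.univ) => norm_nonneg (β i))
  nlinarith [norm_nonneg (tens β)]

noncomputable def featSum {n d : ℕ} (x : Fin n → EuclideanSpace ℝ (Fin d))
    (z : Fin n → ℝ) (K : ℕ) : EuclideanSpace ℝ (Fin K → Fin d) :=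
  ∑ c, z c • tens (fun _ => x c)

lemma inner_tens_featSum {n d K : ℕ} (x : Fin n → EuclideanSpace ℝ (Fin d))
    (z : Fin n → ℝ) (β : Fin K → EuclideanSpace ℝ (Fin d)) :
    ⟪tens β, featSum x z K⟫ = ∑ c, z c * ∏ i, ⟪β i, x c⟫ := by
  rw [featSum, inner_sum]
  refine Finset.sum_congr rfl fun c _ => ?_
  rw [real_inner_smul_right, inner_tens]

lemma mono_bound {n d K : ℕ} (x : Fin n → EuclideanSpace ℝ (Fin d))
    (z : Fin n → ℝ) (β : Fin K → EuclideanSpace ℝ (Fin d)) :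
    |∑ c, z c * ∏ i, ⟪β i, x c⟫| ≤ (∏ i, ‖β i‖) * ‖featSum x z K‖ := by
  rw [← inner_tens_featSum]
  calc |⟪tens β, featSum x z K⟫| ≤ ‖tens β‖ * ‖featSum x z K‖ :=
        abs_real_inner_le_norm _ _
    _ = (∏ i, ‖β i‖) * ‖featSum x z K‖ := by rw [norm_tens]

lemma norm_featSum_sq {n d : ℕ} (x : Fin n → EuclideanSpace ℝ (Fin d))
    (z : Fin n → ℝ) (K : ℕ) :
    ‖featSum x z K‖ ^ 2 = ∑ a, ∑ c, z a * z c * ⟪x a, x c⟫ ^ K := by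
  rw [← real_inner_self_eq_norm_sq, featSum, sum_inner]
  refine Finset.sum_congr rfl fun a _ => ?_
  rw [real_inner_smul_left, inner_sum, Finset.mul_sum]
  refine Finset.sum_congr rfl fun c _ => ?_
  rw [real_inner_smul_right, inner_tens]
  simp [mul_assoc, Finset.prod_const, Finset.card_univ]

lemma prod_append {d k l : ℕ} (β : Fin k → EuclideanSpace ℝ (Fin d))
    (γ : Fin l → EuclideanSpace ℝ (Fin d)) (F : EuclideanSpace ℝ (Fin d) → ℝ) :
    ∏ i, F (Fin.append β γ i) = (∏ i, F (β i)) * ∏ j, F (γ j) := by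
  rw [Fin.prod_univ_add]
  simp [Fin.append_left, Fin.append_right]

lemma mono_bound2 {n d k l : ℕ} (x : Fin n → EuclideanSpace ℝ (Fin d))
    (z : Fin n → ℝ) (β : Fin k → EuclideanSpace ℝ (Fin d))
    (γ : Fin l → EuclideanSpace ℝ (Fin d)) :
    |∑ c, z c * ((∏ i, ⟪β i, x c⟫) * ∏ j, ⟪γ j, x c⟫)| ≤
      ((∏ i, ‖β i‖) * ∏ j, ‖γ j‖) * ‖featSum x z (k + l)‖ := by
  have h := mono_bound x z (Fin.append β γ)
  have e1 : ∀ c, ∏ i, ⟪Fin.append β γ i, x c⟫ = (∏ i, ⟪β i, x c⟫) * ∏ j, ⟪γ j, x c⟫ :=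
    fun c => prod_append β γ (fun w => ⟪w, x c⟫)
  have e2 : ∏ i, ‖Fin.append β γ i‖ = (∏ i, ‖β i‖) * ∏ j, ‖γ j‖ :=
    prod_append β γ (fun w => ‖w‖)
  simp only [e1, e2] at h
  exact h

lemma mono_abs_le {d k : ℕ} {xc : EuclideanSpace ℝ (Fin d)} (hxc : ‖xc‖ = 1)
    (a : ℝ) (β : Fin k → EuclideanSpace ℝ (Fin d)) :
    |a * ∏ i, ⟪β i, xc⟫| ≤ |a| * ∏ i, ‖β i‖ := by
  rw [abs_mul]
  refine mul_le_mul_of_nonneg_left ?_ (abs_nonneg a)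
  calc |∏ i, ⟪β i, xc⟫| = ∏ i, |⟪β i, xc⟫| := by rw [Finset.abs_prod]
    _ ≤ ∏ i, ‖β i‖ := by
        refine Finset.prod_le_prod (fun i _ => abs_nonneg _) fun i _ => ?_
        calc |⟪β i, xc⟫| ≤ ‖β i‖ * ‖xc‖ := abs_real_inner_le_norm _ _
          _ = ‖β i‖ := by rw [hxc, mul_one]

lemma summable_mono {d k : ℕ} {xc : EuclideanSpace ℝ (Fin d)} (hxc : ‖xc‖ = 1)
    {a : ℕ → ℝ} {β : ℕ → Fin k → EuclideanSpace ℝ (Fin d)}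
    (h : Summable fun v => |a v| * ∏ i, ‖β v i‖) :
    Summable fun v => a v * ∏ i, ⟪β v i, xc⟫ := by
  refine Summable.of_abs (h.of_nonneg_of_le (fun v => abs_nonneg _)
    (fun v => mono_abs_le hxc (a v) (β v)))

lemma pairBound {n d k l : ℕ} (x : Fin n → EuclideanSpace ℝ (Fin d))
    (hx : ∀ a, ‖x a‖ = 1) (z : Fin n → ℝ)
    (a1 : ℕ → ℝ) (β1 : ℕ → Fin k → EuclideanSpace ℝ (Fin d))
    (a2 : ℕ → ℝ) (β2 : ℕ → Fin l → EuclideanSpace ℝ (Fin d))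
    (h1 : Summable fun v => |a1 v| * ∏ i, ‖β1 v i‖)
    (h2 : Summable fun u => |a2 u| * ∏ j, ‖β2 u j‖) :
    |∑ c, z c * ((∑' v, a1 v * ∏ i, ⟪β1 v i, x c⟫) * (∑' u, a2 u * ∏ j, ⟪β2 u j, x c⟫))| ≤
      (∑' v, |a1 v| * ∏ i, ‖β1 v i‖) * (∑' u, |a2 u| * ∏ j, ‖β2 u j‖) *
        ‖featSum x z (k + l)‖ := by
  -- rewrite product of tsums as tsum over pairs
  have habs1 : ∀ c, Summable fun v => ‖a1 v * ∏ i, ⟪β1 v i, x c⟫‖ := fun c =>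
    h1.of_nonneg_of_le (fun v => norm_nonneg _) (fun v => mono_abs_le (hx c) (a1 v) (β1 v))
  have habs2 : ∀ c, Summable fun u => ‖a2 u * ∏ j, ⟪β2 u j, x c⟫‖ := fun c =>
    h2.of_nonneg_of_le (fun u => norm_nonneg _) (fun u => mono_abs_le (hx c) (a2 u) (β2 u))
  have hprod : ∀ c, (∑' v, a1 v * ∏ i, ⟪β1 v i, x c⟫) * (∑' u, a2 u * ∏ j, ⟪β2 u j, x c⟫)
      = ∑' p : ℕ × ℕ, (a1 p.1 * ∏ i, ⟪β1 p.1 i, x c⟫) * (a2 p.2 * ∏ j, ⟪β2 p.2 j, x c⟫) :=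
    fun c => tsum_mul_tsum_of_summable_norm (habs1 c) (habs2 c)
  -- exchange finite sum and tsum
  have hsumm : ∀ c : Fin n, Summable fun p : ℕ × ℕ =>
      z c * ((a1 p.1 * ∏ i, ⟪β1 p.1 i, x c⟫) * (a2 p.2 * ∏ j, ⟪β2 p.2 j, x c⟫)) := by
    intro c
    exact (summable_mul_of_summable_norm (habs1 c) (habs2 c)).mul_left (z c)
  have hswap : ∑ c, z c * ((∑' v, a1 v * ∏ i, ⟪β1 v i, x c⟫) * (∑' u, a2 u * ∏ j, ⟪β2 u j, x c⟫))
      = ∑' p : ℕ × ℕ, ∑ c, z c * ((a1 p.1 * ∏ i, ⟪β1 p.1 i, x c⟫) *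
          (a2 p.2 * ∏ j, ⟪β2 p.2 j, x c⟫)) := by
    rw [Summable.tsum_finsetSum (fun c _ => hsumm c)]
    refine Finset.sum_congr rfl fun c _ => ?_
    rw [hprod c, tsum_mul_left]
  rw [hswap]
  -- bound the tsum termwise
  have h1n : Summable fun v => ‖|a1 v| * ∏ i, ‖β1 v i‖‖ :=
    h1.congr fun v => (Real.norm_of_nonneg (mul_nonneg (abs_nonneg _)
      (Finset.prod_nonneg fun i _ => norm_nonneg _))).symm
  have h2n : Summable fun u => ‖|a2 u| * ∏ j, ‖β2 u j‖‖ :=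
    h2.congr fun u => (Real.norm_of_nonneg (mul_nonneg (abs_nonneg _)
      (Finset.prod_nonneg fun j _ => norm_nonneg _))).symm
  have hMsum : Summable fun p : ℕ × ℕ =>
      (|a1 p.1| * ∏ i, ‖β1 p.1 i‖) * (|a2 p.2| * ∏ j, ‖β2 p.2 j‖) * ‖featSum x z (k + l)‖ :=
    (summable_mul_of_summable_norm h1n h2n).mul_right _
  -- termwise bound
  have hterm : ∀ p : ℕ × ℕ, |∑ c, z c * ((a1 p.1 * ∏ i, ⟪β1 p.1 i, x c⟫) *
      (a2 p.2 * ∏ j, ⟪β2 p.2 j, x c⟫))|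
      ≤ (|a1 p.1| * ∏ i, ‖β1 p.1 i‖) * (|a2 p.2| * ∏ j, ‖β2 p.2 j‖) * ‖featSum x z (k + l)‖ := by
    rintro ⟨v, u⟩
    have e : ∀ c, z c * ((a1 v * ∏ i, ⟪β1 v i, x c⟫) * (a2 u * ∏ j, ⟪β2 u j, x c⟫))
        = (a1 v * a2 u) * (z c * ((∏ i, ⟪β1 v i, x c⟫) * ∏ j, ⟪β2 u j, x c⟫)) := by
      intro c; ring
    simp only [e]
    rw [← Finset.mul_sum, abs_mul, abs_mul]
    have := mono_bound2 x z (β1 v) (β2 u)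
    calc |a1 v| * |a2 u| * |∑ c, z c * ((∏ i, ⟪β1 v i, x c⟫) * ∏ j, ⟪β2 u j, x c⟫)|
        ≤ |a1 v| * |a2 u| * (((∏ i, ‖β1 v i‖) * ∏ j, ‖β2 u j‖) * ‖featSum x z (k + l)‖) := by
          refine mul_le_mul_of_nonneg_left this (mul_nonneg (abs_nonneg _) (abs_nonneg _))
      _ = (|a1 v| * ∏ i, ‖β1 v i‖) * (|a2 u| * ∏ j, ‖β2 u j‖) * ‖featSum x z (k + l)‖ := by
          ring
  have hsum2 : Summable fun p : ℕ × ℕ => ∑ c, z c * ((a1 p.1 * ∏ i, ⟪β1 p.1 i, x c⟫) *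
      (a2 p.2 * ∏ j, ⟪β2 p.2 j, x c⟫)) :=
    Summable.of_abs (hMsum.of_nonneg_of_le (fun p => abs_nonneg _) hterm)
  calc |∑' p : ℕ × ℕ, ∑ c, z c * ((a1 p.1 * ∏ i, ⟪β1 p.1 i, x c⟫) *
          (a2 p.2 * ∏ j, ⟪β2 p.2 j, x c⟫))|
      ≤ ∑' p : ℕ × ℕ, (|a1 p.1| * ∏ i, ‖β1 p.1 i‖) * (|a2 p.2| * ∏ j, ‖β2 p.2 j‖) *
          ‖featSum x z (k + l)‖ := by
        have habsw : Summable fun p : ℕ × ℕ => |∑ c, z c * ((a1 p.1 * ∏ i, ⟪β1 p.1 i, x c⟫) *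
            (a2 p.2 * ∏ j, ⟪β2 p.2 j, x c⟫))| :=
          hMsum.of_nonneg_of_le (fun p => abs_nonneg _) hterm
        calc |∑' p : ℕ × ℕ, ∑ c, z c * ((a1 p.1 * ∏ i, ⟪β1 p.1 i, x c⟫) *
                (a2 p.2 * ∏ j, ⟪β2 p.2 j, x c⟫))|
            ≤ ∑' p : ℕ × ℕ, |∑ c, z c * ((a1 p.1 * ∏ i, ⟪β1 p.1 i, x c⟫) *
                (a2 p.2 * ∏ j, ⟪β2 p.2 j, x c⟫))| := by
              exact abs_tsum_le' habsw
          _ ≤ _ := Summable.tsum_le_tsum hterm habsw hMsum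
      _ = (∑' v, |a1 v| * ∏ i, ‖β1 v i‖) * (∑' u, |a2 u| * ∏ j, ‖β2 u j‖) *
          ‖featSum x z (k + l)‖ := by
        rw [tsum_mul_right]
        exact congrArg (· * ‖featSum x z (k + l)‖) (tsum_mul_tsum_of_summable_norm h1n h2n).symm

noncomputable def Gfun {d : ℕ} (a : ℕ → ℕ → ℝ)
    (β : (k : ℕ) → ℕ → Fin k → EuclideanSpace ℝ (Fin d)) (k : ℕ)
    (xc : EuclideanSpace ℝ (Fin d)) : ℝ :=
  ∑' v, a k v * ∏ i, ⟪β k v i, xc⟫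

lemma familyFun_eq {d : ℕ} (a : ℕ → ℕ → ℝ)
    (β : (k : ℕ) → ℕ → Fin k → EuclideanSpace ℝ (Fin d)) (xc : EuclideanSpace ℝ (Fin d)) :
    familyFun d a β xc = ∑' k, Gfun a β k xc := rfl

lemma auxCoef_nonneg {d : ℕ} (a : ℕ → ℕ → ℝ)
    (β : (k : ℕ) → ℕ → Fin k → EuclideanSpace ℝ (Fin d)) (k : ℕ) :
    0 ≤ auxCoef d a β k :=
  tsum_nonneg fun v => mul_nonneg (abs_nonneg _) (Finset.prod_nonneg fun i _ => norm_nonneg _)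

lemma Gfun_abs_le {d : ℕ} {a : ℕ → ℕ → ℝ}
    {β : (k : ℕ) → ℕ → Fin k → EuclideanSpace ℝ (Fin d)} {k : ℕ}
    {xc : EuclideanSpace ℝ (Fin d)} (hxc : ‖xc‖ = 1)
    (hk : Summable fun v => |a k v| * ∏ i, ‖β k v i‖) :
    |Gfun a β k xc| ≤ auxCoef d a β k := by
  have habs : Summable fun v => |a k v * ∏ i, ⟪β k v i, xc⟫| :=
    hk.of_nonneg_of_le (fun v => abs_nonneg _) fun v => mono_abs_le hxc (a k v) (β k v)
  calc |Gfun a β k xc| ≤ ∑' v, |a k v * ∏ i, ⟪β k v i, xc⟫| := abs_tsum_le' habs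
    _ ≤ ∑' v, |a k v| * ∏ i, ‖β k v i‖ :=
        Summable.tsum_le_tsum (fun v => mono_abs_le hxc (a k v) (β k v)) habs hk
    _ = auxCoef d a β k := rfl

lemma keyBound {n d : ℕ} (x : Fin n → EuclideanSpace ℝ (Fin d))
    (hx : ∀ a, ‖x a‖ = 1)
    (ag : ℕ → ℕ → ℝ) (βg : (k : ℕ) → ℕ → Fin k → EuclideanSpace ℝ (Fin d))
    (ah : ℕ → ℕ → ℝ) (βh : (k : ℕ) → ℕ → Fin k → EuclideanSpace ℝ (Fin d))
    (hauxg : ∀ k : ℕ, Summable (fun v : ℕ => |ag k v| * ∏ i : Fin k, ‖βg k v i‖))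
    (hauxh : ∀ k : ℕ, Summable (fun v : ℕ => |ah k v| * ∏ i : Fin k, ‖βh k v i‖))
    (hg1 : Summable (fun k : ℕ => auxCoef d ag βg k))
    (hg1' : Summable (fun k : ℕ => (k : ℝ) * auxCoef d ag βg k))
    (hh1 : Summable (fun k : ℕ => auxCoef d ah βh k))
    (hh1' : Summable (fun k : ℕ => (k : ℝ) * auxCoef d ah βh k))
    (z : Fin n → ℝ) (W : ℝ)
    (hW : ∀ K : ℕ, ‖featSum x z K‖ ≤ ((K : ℝ) + if K = 0 then 1 else 0) * W) :
    |∑ c, z c * (familyFun d ag βg (x c) * familyFun d ah βh (x c))| ≤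
      ((∑' k : ℕ, (k : ℝ) * auxCoef d ag βg k) * (∑' k : ℕ, auxCoef d ah βh k) +
      (∑' k : ℕ, auxCoef d ag βg k) * (∑' k : ℕ, (k : ℝ) * auxCoef d ah βh k) +
      auxCoef d ag βg 0 * auxCoef d ah βh 0) * W := by
  -- notation
  set gA := fun k => auxCoef d ag βg k with hgA
  set hA := fun k => auxCoef d ah βh k with hhA
  have hgnn : ∀ k, 0 ≤ gA k := fun k => auxCoef_nonneg ag βg k
  have hhnn : ∀ k, 0 ≤ hA k := fun k => auxCoef_nonneg ah βh k
  have hW0 : 0 ≤ W := by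
    have := (norm_nonneg (featSum x z 0)).trans (hW 0)
    simpa using this
  set T := fun (K : ℕ) (c : Fin n) =>
    ∑ kl ∈ Finset.HasAntidiagonal.antidiagonal K, Gfun ag βg kl.1 (x c) * Gfun ah βh kl.2 (x c) with hT
  set cc := fun K => ∑ kl ∈ Finset.HasAntidiagonal.antidiagonal K, gA kl.1 * hA kl.2 with hcc
  set κ := fun K : ℕ => ((K : ℝ) + if K = 0 then 1 else 0) with hκ
  have hκnn : ∀ K, 0 ≤ κ K := by
    intro K; rw [hκ]; dsimp only; split <;> positivity
  -- abs bounds for Gfun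
  have hGg : ∀ k c, |Gfun ag βg k (x c)| ≤ gA k := fun k c => Gfun_abs_le (hx c) (hauxg k)
  have hGh : ∀ k c, |Gfun ah βh k (x c)| ≤ hA k := fun k c => Gfun_abs_le (hx c) (hauxh k)
  have hGgn : ∀ c, Summable fun k => ‖Gfun ag βg k (x c)‖ :=
    fun c => hg1.of_nonneg_of_le (fun k => norm_nonneg _) (fun k => hGg k c)
  have hGhn : ∀ c, Summable fun k => ‖Gfun ah βh k (x c)‖ :=
    fun c => hh1.of_nonneg_of_le (fun k => norm_nonneg _) (fun k => hGh k c)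
  -- product decomposition by total degree
  have hdecomp : ∀ c, familyFun d ag βg (x c) * familyFun d ah βh (x c) = ∑' K, T K c := by
    intro c
    rw [familyFun_eq, familyFun_eq]
    exact tsum_mul_tsum_eq_tsum_sum_antidiagonal_of_summable_norm (hGgn c) (hGhn c)
  -- termwise bound on T
  have hTabs : ∀ K c, |T K c| ≤ cc K := by
    intro K c
    rw [hT, hcc]
    refine (Finset.abs_sum_le_sum_abs _ _).trans ?_
    refine Finset.sum_le_sum fun kl _ => ?_
    rw [abs_mul]
    exact mul_le_mul (hGg _ c) (hGh _ c) (abs_nonneg _) (hgnn _)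
  have hccnn : ∀ K, 0 ≤ cc K := fun K =>
    Finset.sum_nonneg fun kl _ => mul_nonneg (hgnn _) (hhnn _)
  -- summability of cc and K * cc
  have hccsum : Summable cc :=
    summable_sum_mul_antidiagonal_of_summable_mul
      (hg1.mul_of_nonneg hh1 hgnn hhnn)
  have hKcc : ∀ K : ℕ, (K : ℝ) * cc K =
      (∑ kl ∈ Finset.HasAntidiagonal.antidiagonal K, ((kl.1 : ℝ) * gA kl.1) * hA kl.2) +
      (∑ kl ∈ Finset.HasAntidiagonal.antidiagonal K, gA kl.1 * ((kl.2 : ℝ) * hA kl.2)) := by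
    intro K
    rw [hcc, Finset.mul_sum, ← Finset.sum_add_distrib]
    refine Finset.sum_congr rfl fun kl hkl => ?_
    have : kl.1 + kl.2 = K := Finset.HasAntidiagonal.mem_antidiagonal.mp hkl
    have : ((kl.1 : ℝ) + kl.2) = (K : ℝ) := by exact_mod_cast congrArg Nat.cast this
    rw [← this]; ring
  have hg1A : Summable (fun k : ℕ => (k : ℝ) * gA k) := hg1'
  have hh1A : Summable (fun k : ℕ => (k : ℝ) * hA k) := hh1'
  have hgA : Summable gA := hg1
  have hhA : Summable hA := hh1
  have hs1 : Summable (fun K : ℕ =>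
      ∑ kl ∈ Finset.HasAntidiagonal.antidiagonal K, ((kl.1 : ℝ) * gA kl.1) * hA kl.2) :=
    summable_sum_mul_antidiagonal_of_summable_mul (f := fun k : ℕ => (k : ℝ) * gA k)
      (g := hA) (hg1A.mul_of_nonneg hhA (fun k => mul_nonneg (Nat.cast_nonneg k) (hgnn k)) hhnn)
  have hs2 : Summable (fun K : ℕ =>
      ∑ kl ∈ Finset.HasAntidiagonal.antidiagonal K, gA kl.1 * ((kl.2 : ℝ) * hA kl.2)) :=
    summable_sum_mul_antidiagonal_of_summable_mul (f := gA)
      (g := fun k : ℕ => (k : ℝ) * hA k) (hgA.mul_of_nonneg hh1A hgnn (fun k => mul_nonneg (Nat.cast_nonneg k) (hhnn k)))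
  have hKccsum : Summable (fun K : ℕ => (K : ℝ) * cc K) :=
    (hs1.add hs2).congr (fun K => (hKcc K).symm)
  have hite : Summable (fun K : ℕ => if K = 0 then cc 0 else 0) :=
    summable_of_finite_support (Set.Finite.subset (Set.finite_singleton 0)
      (by intro K hK
          rcases eq_or_ne K 0 with h | h
          · simp [h]
          · simp [Function.mem_support, h] at hK))
  have hκcceq : ∀ K : ℕ, κ K * cc K = (K : ℝ) * cc K + (if K = 0 then cc 0 else 0) := by
    intro K
    rw [hκ]; by_cases h : K = 0 <;> simp [h] <;> ring
  have hκccsum : Summable (fun K : ℕ => κ K * cc K * W) :=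
    Summable.mul_right _ ((hKccsum.add hite).congr (fun K => (hκcceq K).symm))
  -- per-K bound via pairBound
  have hkey : ∀ K, |∑ c, z c * T K c| ≤ cc K * ‖featSum x z K‖ := by
    intro K
    have expand : ∑ c, z c * T K c = ∑ kl ∈ Finset.HasAntidiagonal.antidiagonal K,
        ∑ c, z c * (Gfun ag βg kl.1 (x c) * Gfun ah βh kl.2 (x c)) := by
      rw [hT]
      simp_rw [Finset.mul_sum]
      exact Finset.sum_comm
    rw [expand, hcc, Finset.sum_mul]
    refine (Finset.abs_sum_le_sum_abs _ _).trans (Finset.sum_le_sum fun kl hkl => ?_)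
    have hkl' : kl.1 + kl.2 = K := Finset.HasAntidiagonal.mem_antidiagonal.mp hkl
    have hpb := pairBound x hx z (ag kl.1) (βg kl.1) (ah kl.2) (βh kl.2)
      (hauxg kl.1) (hauxh kl.2)
    rw [hkl'] at hpb
    exact hpb
  have hmaj : ∀ K, |∑ c, z c * T K c| ≤ κ K * cc K * W := by
    intro K
    refine (hkey K).trans ?_
    have h1 : ‖featSum x z K‖ ≤ κ K * W := hW K
    calc cc K * ‖featSum x z K‖ ≤ cc K * (κ K * W) :=
          mul_le_mul_of_nonneg_left h1 (hccnn K)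
      _ = κ K * cc K * W := by ring
  have hTsum : ∀ c, Summable fun K => T K c := fun c =>
    Summable.of_abs (hccsum.of_nonneg_of_le (fun K => abs_nonneg _) (fun K => hTabs K c))
  have hzy : ∑ c, z c * (familyFun d ag βg (x c) * familyFun d ah βh (x c))
      = ∑' K, ∑ c, z c * T K c := by
    have e : ∀ c, z c * (familyFun d ag βg (x c) * familyFun d ah βh (x c))
        = ∑' K, z c * T K c := by
      intro c
      rw [hdecomp c]
      exact tsum_mul_left.symm
    calc ∑ c, z c * (familyFun d ag βg (x c) * familyFun d ah βh (x c))
        = ∑ c, ∑' K, z c * T K c := Finset.sum_congr rfl fun c _ => e c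
      _ = ∑' K, ∑ c, z c * T K c :=
          (Summable.tsum_finsetSum (fun c _ => (hTsum c).mul_left (z c))).symm
  have habsSummand : Summable fun K => |∑ c, z c * T K c| :=
    hκccsum.of_nonneg_of_le (fun K => abs_nonneg _) hmaj
  -- norm-summability for the Cauchy product identities
  have hg1n : Summable fun k : ℕ => ‖(k : ℝ) * gA k‖ := hg1A.congr fun k =>
    (Real.norm_of_nonneg (mul_nonneg (Nat.cast_nonneg k) (hgnn k))).symm
  have hh1n : Summable fun k : ℕ => ‖(k : ℝ) * hA k‖ := hh1A.congr fun k =>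
    (Real.norm_of_nonneg (mul_nonneg (Nat.cast_nonneg k) (hhnn k))).symm
  have hgn : Summable fun k : ℕ => ‖gA k‖ := hgA.congr fun k =>
    (Real.norm_of_nonneg (hgnn k)).symm
  have hhn : Summable fun k : ℕ => ‖hA k‖ := hhA.congr fun k =>
    (Real.norm_of_nonneg (hhnn k)).symm
  have e1 : (∑' K : ℕ, ∑ kl ∈ Finset.HasAntidiagonal.antidiagonal K, ((kl.1 : ℝ) * gA kl.1) * hA kl.2)
      = (∑' k : ℕ, (k : ℝ) * gA k) * (∑' k, hA k) :=
    (tsum_mul_tsum_eq_tsum_sum_antidiagonal_of_summable_norm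
      (f := fun k : ℕ => (k : ℝ) * gA k) (g := hA) hg1n hhn).symm
  have e2 : (∑' K : ℕ, ∑ kl ∈ Finset.HasAntidiagonal.antidiagonal K, gA kl.1 * ((kl.2 : ℝ) * hA kl.2))
      = (∑' k : ℕ, gA k) * (∑' k : ℕ, (k : ℝ) * hA k) :=
    (tsum_mul_tsum_eq_tsum_sum_antidiagonal_of_summable_norm
      (f := gA) (g := fun k : ℕ => (k : ℝ) * hA k) hgn hh1n).symm
  have hccval : ∑' K, κ K * cc K =
      (∑' k : ℕ, (k : ℝ) * gA k) * (∑' k, hA k)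
      + (∑' k : ℕ, gA k) * (∑' k : ℕ, (k : ℝ) * hA k) + gA 0 * hA 0 := by
    calc ∑' K, κ K * cc K
        = ∑' K : ℕ, ((K : ℝ) * cc K + if K = 0 then cc 0 else 0) := tsum_congr hκcceq
      _ = (∑' K : ℕ, (K : ℝ) * cc K) + ∑' K : ℕ, (if K = 0 then cc 0 else 0) :=
          Summable.tsum_add hKccsum hite
      _ = (∑' K : ℕ, (K : ℝ) * cc K) + cc 0 := by rw [tsum_ite_eq]
      _ = ((∑' K : ℕ, ∑ kl ∈ Finset.HasAntidiagonal.antidiagonal K, ((kl.1 : ℝ) * gA kl.1) * hA kl.2)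
            + ∑' K : ℕ, ∑ kl ∈ Finset.HasAntidiagonal.antidiagonal K, gA kl.1 * ((kl.2 : ℝ) * hA kl.2))
            + cc 0 := by
          rw [← Summable.tsum_add hs1 hs2]
          congr 1
          exact tsum_congr hKcc
      _ = (∑' k : ℕ, (k : ℝ) * gA k) * (∑' k, hA k)
          + (∑' k : ℕ, gA k) * (∑' k : ℕ, (k : ℝ) * hA k) + gA 0 * hA 0 := by
          rw [e1, e2, hcc]
          simp [Finset.Nat.antidiagonal_zero]
  calc |∑ c, z c * (familyFun d ag βg (x c) * familyFun d ah βh (x c))|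
      = |∑' K, ∑ c, z c * T K c| := by rw [hzy]
    _ ≤ ∑' K, |∑ c, z c * T K c| := abs_tsum_le' habsSummand
    _ ≤ ∑' K, κ K * cc K * W := Summable.tsum_le_tsum hmaj habsSummand hκccsum
    _ = (∑' K, κ K * cc K) * W := tsum_mul_right
    _ ≤ _ := by rw [hccval]

lemma quadForm {n d : ℕ} (x : Fin n → EuclideanSpace ℝ (Fin d))
    (hx : ∀ a, ‖x a‖ = 1) (b : ℕ → ℝ) (hbnn : ∀ K, 0 ≤ b K) (hb_sum : Summable b)
    (H : Matrix (Fin n) (Fin n) ℝ)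
    (hH : ∀ a c, H a c = ∑' k : ℕ, b k * ⟪x a, x c⟫ ^ k) (z : Fin n → ℝ) :
    z ⬝ᵥ (H *ᵥ z) = ∑' K, b K * ‖featSum x z K‖ ^ 2 := by
  have hinner : ∀ a c : Fin n, |⟪x a, x c⟫| ≤ 1 := by
    intro a c
    calc |⟪x a, x c⟫| ≤ ‖x a‖ * ‖x c‖ := abs_real_inner_le_norm _ _
      _ = 1 := by rw [hx a, hx c, mul_one]
  have hsumK : ∀ a c : Fin n, Summable fun K => (z a * z c) * (b K * ⟪x a, x c⟫ ^ K) := by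
    intro a c
    refine Summable.mul_left _ (Summable.of_abs (hb_sum.of_nonneg_of_le
      (fun K => abs_nonneg _) fun K => ?_))
    rw [abs_mul, abs_of_nonneg (hbnn K), abs_pow]
    calc b K * |⟪x a, x c⟫| ^ K ≤ b K * 1 ^ K := by
          refine mul_le_mul_of_nonneg_left (pow_le_pow_left₀ (abs_nonneg _) (hinner a c) K)
            (hbnn K)
      _ = b K := by rw [one_pow, mul_one]
  have step1 : z ⬝ᵥ (H *ᵥ z) = ∑ a, ∑ c, ∑' K, (z a * z c) * (b K * ⟪x a, x c⟫ ^ K) := by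
    simp only [dotProduct, mulVec, Finset.mul_sum]
    refine Finset.sum_congr rfl fun a _ => Finset.sum_congr rfl fun c _ => ?_
    rw [hH a c]
    have e : z a * ((∑' k : ℕ, b k * ⟪x a, x c⟫ ^ k) * z c)
        = (z a * z c) * ∑' k : ℕ, b k * ⟪x a, x c⟫ ^ k := by ring
    rw [e, ← tsum_mul_left]
  calc z ⬝ᵥ (H *ᵥ z)
      = ∑ a, ∑ c, ∑' K, (z a * z c) * (b K * ⟪x a, x c⟫ ^ K) := step1
    _ = ∑ a, ∑' K, ∑ c, (z a * z c) * (b K * ⟪x a, x c⟫ ^ K) :=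
        Finset.sum_congr rfl fun a _ => (Summable.tsum_finsetSum (fun c _ => hsumK a c)).symm
    _ = ∑' K, ∑ a, ∑ c, (z a * z c) * (b K * ⟪x a, x c⟫ ^ K) :=
        (Summable.tsum_finsetSum (fun a _ => summable_sum (fun c _ => hsumK a c))).symm
    _ = ∑' K, b K * ‖featSum x z K‖ ^ 2 := by
        refine tsum_congr fun K => ?_
        rw [norm_featSum_sq, Finset.mul_sum]
        refine Finset.sum_congr rfl fun a _ => ?_
        rw [Finset.mul_sum]
        exact Finset.sum_congr rfl fun c _ => by ring

/-- **Product rule for learning bounds.**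
If `g` and `h` are given by multivariate power-series families with auxiliary
functions `g̃`, `h̃` such that `g̃(1), g̃′(1), h̃(1), h̃′(1)` are all finite, and
`y_c = g(x_c) h(x_c)`, then
`√(yᵀ H⁻¹ y) ≤ g̃′(1) h̃(1) + g̃(1) h̃′(1) + g̃(0) h̃(0)`. -/
theorem stmt7 (n d : ℕ) (x : Fin n → EuclideanSpace ℝ (Fin d))
    (hx : ∀ a, ‖x a‖ = 1)
    (b : ℕ → ℝ) (hb0 : 1 ≤ b 0) (hbk : ∀ k : ℕ, 1 ≤ k → 1 / (k : ℝ) ^ 2 ≤ b k)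
    (hb_sum : Summable b)
    (H : Matrix (Fin n) (Fin n) ℝ)
    (hH : ∀ a c, H a c = ∑' k : ℕ, b k * ⟪x a, x c⟫ ^ k)
    (hHpd : H.PosDef)
    (ag : ℕ → ℕ → ℝ) (βg : (k : ℕ) → ℕ → Fin k → EuclideanSpace ℝ (Fin d))
    (ah : ℕ → ℕ → ℝ) (βh : (k : ℕ) → ℕ → Fin k → EuclideanSpace ℝ (Fin d))
    (hauxg : ∀ k : ℕ, Summable (fun v : ℕ => |ag k v| * ∏ i : Fin k, ‖βg k v i‖))
    (hauxh : ∀ k : ℕ, Summable (fun v : ℕ => |ah k v| * ∏ i : Fin k, ‖βh k v i‖))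
    (hg1 : Summable (fun k : ℕ => auxCoef d ag βg k))
    (hg1' : Summable (fun k : ℕ => (k : ℝ) * auxCoef d ag βg k))
    (hh1 : Summable (fun k : ℕ => auxCoef d ah βh k))
    (hh1' : Summable (fun k : ℕ => (k : ℝ) * auxCoef d ah βh k))
    (y : Fin n → ℝ)
    (hy : ∀ c, y c = familyFun d ag βg (x c) * familyFun d ah βh (x c)) :
    Real.sqrt (y ⬝ᵥ (H⁻¹ *ᵥ y)) ≤
      (∑' k : ℕ, (k : ℝ) * auxCoef d ag βg k) * (∑' k : ℕ, auxCoef d ah βh k) +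
      (∑' k : ℕ, auxCoef d ag βg k) * (∑' k : ℕ, (k : ℝ) * auxCoef d ah βh k) +
      auxCoef d ag βg 0 * auxCoef d ah βh 0 := by
  set M := (∑' k : ℕ, (k : ℝ) * auxCoef d ag βg k) * (∑' k : ℕ, auxCoef d ah βh k) +
      (∑' k : ℕ, auxCoef d ag βg k) * (∑' k : ℕ, (k : ℝ) * auxCoef d ah βh k) +
      auxCoef d ag βg 0 * auxCoef d ah βh 0 with hM
  have hMnn : 0 ≤ M := by
    rw [hM]
    have t1 : 0 ≤ ∑' k : ℕ, (k : ℝ) * auxCoef d ag βg k :=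
      tsum_nonneg fun k => mul_nonneg (Nat.cast_nonneg k) (auxCoef_nonneg ag βg k)
    have t2 : 0 ≤ ∑' k : ℕ, auxCoef d ah βh k := tsum_nonneg fun k => auxCoef_nonneg ah βh k
    have t3 : 0 ≤ ∑' k : ℕ, auxCoef d ag βg k := tsum_nonneg fun k => auxCoef_nonneg ag βg k
    have t4 : 0 ≤ ∑' k : ℕ, (k : ℝ) * auxCoef d ah βh k :=
      tsum_nonneg fun k => mul_nonneg (Nat.cast_nonneg k) (auxCoef_nonneg ah βh k)
    have t5 := auxCoef_nonneg ag βg 0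
    have t6 := auxCoef_nonneg ah βh 0
    positivity
  have hbnn : ∀ K, 0 ≤ b K := by
    intro K
    rcases Nat.eq_zero_or_pos K with h | h
    · rw [h]; linarith
    · refine le_trans ?_ (hbk K h); positivity
  -- the test vector
  set z := H⁻¹ *ᵥ y with hz
  have hdet : IsUnit H.det := isUnit_iff_ne_zero.mpr hHpd.det_pos.ne'
  have hHz : H *ᵥ z = y := by
    rw [hz, Matrix.mulVec_mulVec, Matrix.mul_nonsing_inv H hdet, Matrix.one_mulVec]
  set Q := y ⬝ᵥ (H⁻¹ *ᵥ y) with hQ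
  have hzy : z ⬝ᵥ y = Q := by rw [hQ, dotProduct_comm, hz]
  have hV : z ⬝ᵥ (H *ᵥ z) = Q := by rw [hHz, hzy]
  -- quadratic form expansion
  have hquad : z ⬝ᵥ (H *ᵥ z) = ∑' K, b K * ‖featSum x z K‖ ^ 2 :=
    quadForm x hx b hbnn hb_sum H hH z
  have hQnn : 0 ≤ Q := by
    rw [← hV, hquad]
    exact tsum_nonneg fun K => mul_nonneg (hbnn K) (sq_nonneg _)
  -- summability of the quadratic series
  have hfeat_le : ∀ K, ‖featSum x z K‖ ≤ ∑ c, |z c| := by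
    intro K
    refine (norm_sum_le _ _).trans (le_of_eq (Finset.sum_congr rfl fun c _ => ?_))
    rw [norm_smul, norm_tens]
    simp [hx c, Real.norm_eq_abs]
  have hbs_sum : Summable fun K => b K * ‖featSum x z K‖ ^ 2 := by
    refine (hb_sum.mul_right ((∑ c, |z c|) ^ 2)).of_nonneg_of_le
      (fun K => mul_nonneg (hbnn K) (sq_nonneg _)) fun K => ?_
    refine mul_le_mul_of_nonneg_left ?_ (hbnn K)
    exact pow_le_pow_left₀ (norm_nonneg _) (hfeat_le K) 2
  have hterm_le : ∀ K, b K * ‖featSum x z K‖ ^ 2 ≤ Q := by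
    intro K
    rw [← hV, hquad]
    exact Summable.le_tsum hbs_sum K fun J _ => mul_nonneg (hbnn J) (sq_nonneg _)
  -- the W bound
  have hW : ∀ K : ℕ, ‖featSum x z K‖ ≤ ((K : ℝ) + if K = 0 then 1 else 0) * Real.sqrt Q := by
    intro K
    set κ := (K : ℝ) + if K = 0 then 1 else 0 with hκ
    have hκnn : 0 ≤ κ := by rw [hκ]; split <;> positivity
    have hκb : 1 ≤ κ ^ 2 * b K := by
      rcases Nat.eq_zero_or_pos K with h | h
      · subst h; simp [hκ]; nlinarith
      · have hb := hbk K h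
        have hK0 : K ≠ 0 := Nat.pos_iff_ne_zero.mp h
        have hκK : κ = (K : ℝ) := by rw [hκ]; simp [hK0]
        have hKpos : (0 : ℝ) < (K : ℝ) ^ 2 := by positivity
        rw [hκK]
        calc (1 : ℝ) = (K : ℝ) ^ 2 * (1 / (K : ℝ) ^ 2) := by field_simp
          _ ≤ (K : ℝ) ^ 2 * b K := mul_le_mul_of_nonneg_left hb (le_of_lt hKpos)
    have h2 : ‖featSum x z K‖ ^ 2 ≤ κ ^ 2 * Q := by
      calc ‖featSum x z K‖ ^ 2 = 1 * ‖featSum x z K‖ ^ 2 := (one_mul _).symm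
        _ ≤ (κ ^ 2 * b K) * ‖featSum x z K‖ ^ 2 :=
            mul_le_mul_of_nonneg_right hκb (sq_nonneg _)
        _ = κ ^ 2 * (b K * ‖featSum x z K‖ ^ 2) := by ring
        _ ≤ κ ^ 2 * Q := mul_le_mul_of_nonneg_left (hterm_le K) (sq_nonneg _)
    calc ‖featSum x z K‖ = Real.sqrt (‖featSum x z K‖ ^ 2) :=
          (Real.sqrt_sq (norm_nonneg _)).symm
      _ ≤ Real.sqrt (κ ^ 2 * Q) := Real.sqrt_le_sqrt h2
      _ = κ * Real.sqrt Q := by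
          rw [Real.sqrt_mul (sq_nonneg _), Real.sqrt_sq hκnn]
  -- apply the key bound
  have hkey := keyBound x hx ag βg ah βh hauxg hauxh hg1 hg1' hh1 hh1' z (Real.sqrt Q) hW
  have hzy2 : ∑ c, z c * (familyFun d ag βg (x c) * familyFun d ah βh (x c)) = Q := by
    rw [← hzy]
    exact Finset.sum_congr rfl fun c _ => by rw [← hy c]
  rw [hzy2, ← hM] at hkey
  -- conclude
  rcases eq_or_lt_of_le hQnn with h | h
  · rw [← h, Real.sqrt_zero]; exact hMnn
  · have hsq : 0 < Real.sqrt Q := Real.sqrt_pos.mpr h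
    have : Real.sqrt Q * Real.sqrt Q ≤ M * Real.sqrt Q := by
      rw [Real.mul_self_sqrt hQnn]
      exact (le_abs_self Q).trans hkey
    exact le_of_mul_le_mul_right this hsq
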